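/- For γ = 7/11 there is a constant C such that for all positive integers n, Σ_{x₁ < n} x₁^{-γ} Σ_{x₂+x₃ = n−x₁} (x₂x₃)^{-γ} Σ_{x₂'+x₃' = n−x₁} (x₂'x₃')^{-γ} ≤ C n^{3−5γ} = C n^{-2/11}, where all variables are positive integers. -/

import Mathlib

open Finset Real

lemma key1 {p : ℝ} (hp0 : 0 < p) (hp1 : p < 1) {N : ℕ} (hN : 1 ≤ N) :
    (N : ℝ) ^ (-p) ≤ (2 / (1 - p)) * (((N : ℝ) + 1) ^ (1 - p) - (N : ℝ) ^ (1 - p)) := by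
  have hNpos : (0:ℝ) < N := by exact_mod_cast hN
  have hb : (0:ℝ) < (N:ℝ) + 1 := by linarith
  have hq0 : (0:ℝ) ≤ 1 - p := by linarith
  have hq1 : 1 - p ≤ 1 := by linarith
  -- concavity step: N^{1-p} ≤ (N+1)^{1-p} - (1-p) (N+1)^{-p}
  have hs : (-1:ℝ) ≤ -(1 / ((N:ℝ)+1)) := by
    rw [neg_le_neg_iff]
    rw [div_le_one hb]; linarith
  have hbern := rpow_one_add_le_one_add_mul_self hs hq0 hq1
  have hfact : (N:ℝ) = ((N:ℝ)+1) * (1 + -(1 / ((N:ℝ)+1))) := by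
    field_simp
    ring
  have h1 : (N:ℝ) ^ (1-p) ≤ ((N:ℝ)+1) ^ (1-p) * (1 + (1-p) * -(1 / ((N:ℝ)+1))) := by
    calc (N:ℝ) ^ (1-p) = (((N:ℝ)+1) * (1 + -(1 / ((N:ℝ)+1)))) ^ (1-p) := by rw [← hfact]
    _ = ((N:ℝ)+1) ^ (1-p) * (1 + -(1 / ((N:ℝ)+1))) ^ (1-p) := by
        rw [Real.mul_rpow hb.le (by linarith [hs])]
    _ ≤ ((N:ℝ)+1) ^ (1-p) * (1 + (1-p) * -(1 / ((N:ℝ)+1))) := by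
        apply mul_le_mul_of_nonneg_left hbern (Real.rpow_nonneg hb.le _)
  have hpow : ((N:ℝ)+1) ^ (1-p) * (1 / ((N:ℝ)+1)) = ((N:ℝ)+1) ^ (-p) := by
    rw [one_div, ← Real.rpow_neg_one ((N:ℝ)+1), ← Real.rpow_add hb]
    ring_nf
  have h2 : (1 - p) * (((N:ℝ)+1) ^ (-p)) ≤ ((N:ℝ)+1) ^ (1-p) - (N:ℝ) ^ (1-p) := by
    have e : ((N:ℝ) + 1) ^ (1 - p) * ((1 - p) * (1 / ((N:ℝ) + 1))) = (1-p) * (((N:ℝ)+1)^(-p)) := by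
      rw [← hpow]; ring
    nlinarith [h1, e]
  -- (N+1)^{-p} ≥ (1/2) N^{-p}
  have h3 : (1/2) * (N:ℝ) ^ (-p) ≤ ((N:ℝ)+1) ^ (-p) := by
    have hle : ((N:ℝ)+1) ≤ 2 * N := by
      have : (1:ℝ) ≤ N := by exact_mod_cast hN
      linarith
    have e1 : ((N:ℝ)+1) ^ (-p) ≥ (2 * (N:ℝ)) ^ (-p) :=
      Real.rpow_le_rpow_of_nonpos hb hle (by linarith)
    have e2 : (2 * (N:ℝ)) ^ (-p) = (2:ℝ) ^ (-p) * (N:ℝ) ^ (-p) :=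
      Real.mul_rpow (by norm_num) hNpos.le
    have e3 : (1/2 : ℝ) ≤ (2:ℝ) ^ (-p) := by
      have : (2:ℝ) ^ (-1:ℝ) ≤ (2:ℝ) ^ (-p) :=
        Real.rpow_le_rpow_of_exponent_le (by norm_num) (by linarith)
      rw [Real.rpow_neg_one] at this
      rw [one_div]; exact this
    have : (1/2 : ℝ) * (N:ℝ) ^ (-p) ≤ (2:ℝ) ^ (-p) * (N:ℝ) ^ (-p) := by
      apply mul_le_mul_of_nonneg_right _ (Real.rpow_nonneg hNpos.le _)
      · exact e3
    calc (1/2 : ℝ) * (N:ℝ) ^ (-p) ≤ (2:ℝ) ^ (-p) * (N:ℝ) ^ (-p) := this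
    _ = (2 * (N:ℝ)) ^ (-p) := e2.symm
    _ ≤ ((N:ℝ)+1) ^ (-p) := e1
  have hq : (0:ℝ) < 1 - p := by linarith
  calc (N:ℝ) ^ (-p) = (2 / (1-p)) * ((1-p) * ((1/2) * (N:ℝ) ^ (-p))) := by
        field_simp
  _ ≤ (2 / (1-p)) * ((1-p) * (((N:ℝ)+1) ^ (-p))) := by
        apply mul_le_mul_of_nonneg_left _ (by positivity)
        exact mul_le_mul_of_nonneg_left h3 hq.le
  _ ≤ (2 / (1-p)) * (((N:ℝ)+1) ^ (1-p) - (N:ℝ) ^ (1-p)) := by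
        apply mul_le_mul_of_nonneg_left h2 (by positivity)

lemma sumA {p : ℝ} (hp0 : 0 < p) (hp1 : p < 1) (N : ℕ) :
    ∑ x ∈ Finset.Ico 1 N, (x:ℝ) ^ (-p) ≤ (2 / (1 - p)) * (N:ℝ) ^ (1 - p) := by
  induction N with
  | zero => simp [Real.zero_rpow (by linarith : (1:ℝ) - p ≠ 0)]
  | succ N ih =>
    rcases Nat.eq_zero_or_pos N with rfl | hN
    · simp
      have : (0:ℝ) < 1 - p := by linarith
      positivity
    rw [Finset.sum_Ico_succ_top hN]
    have := key1 hp0 hp1 hN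
    push_cast
    linarith



lemma sumRefl (p : ℝ) (m : ℕ) :
    ∑ x ∈ Finset.Ico 1 m, ((m - x : ℕ):ℝ)^(-p) = ∑ x ∈ Finset.Ico 1 m, (x:ℝ)^(-p) := by
  apply Finset.sum_nbij' (fun x => m - x) (fun x => m - x)
  · intro a ha; simp only [Finset.mem_Ico] at ha ⊢; omega
  · intro a ha; simp only [Finset.mem_Ico] at ha ⊢; omega
  · intro a ha; simp only [Finset.mem_Ico] at ha; omega
  · intro a ha; simp only [Finset.mem_Ico] at ha; omega
  · intro a ha; rfl

lemma sumB2 {p q : ℝ} (hp0 : 0 < p) (hp1 : p < 1) (hq0 : 0 < q) (hq1 : q < 1) (m : ℕ) :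
    ∑ x ∈ Finset.Ico 1 m, (x:ℝ)^(-p) * ((m - x : ℕ):ℝ)^(-q)
      ≤ (8/((1-p)*(1-q))) * (m:ℝ)^(1-p-q) := by
  have h1 : (0:ℝ) < 1 - p := by linarith
  have h2 : (0:ℝ) < 1 - q := by linarith
  rcases lt_or_ge m 2 with hm | hm
  · rw [Finset.Ico_eq_empty (by omega), Finset.sum_empty]
    positivity
  · have hm2 : (2:ℝ) ≤ (m:ℝ) := by exact_mod_cast hm
    have mpos : (0:ℝ) < (m:ℝ) := by linarith
    have half_pos : (0:ℝ) < (m:ℝ)/2 := by linarith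
    have hhalf : ∀ r : ℝ, 0 < r → r ≤ 1 → ∀ t : ℝ, (m:ℝ)/2 ≤ t →
        t^(-r) ≤ 2 * (m:ℝ)^(-r) := by
      intro r hr hr1 t ht
      have hb1 : t^(-r) ≤ ((m:ℝ)/2)^(-r) :=
        Real.rpow_le_rpow_of_nonpos half_pos ht (by linarith)
      have hb2 : ((m:ℝ)/2)^(-r) = (2:ℝ)^r * (m:ℝ)^(-r) := by
        rw [Real.div_rpow mpos.le (by norm_num), Real.rpow_neg (by norm_num : (0:ℝ) ≤ 2),
          div_eq_mul_inv, inv_inv]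
        ring
      have hb3 : (2:ℝ)^r ≤ 2 := by
        have := Real.rpow_le_rpow_of_exponent_le (by norm_num : (1:ℝ) ≤ 2) hr1
        rwa [Real.rpow_one] at this
      calc t^(-r) ≤ (2:ℝ)^r * (m:ℝ)^(-r) := by rw [← hb2]; exact hb1
        _ ≤ 2 * (m:ℝ)^(-r) :=
          mul_le_mul_of_nonneg_right hb3 (Real.rpow_nonneg mpos.le _)
    have hexp : (m:ℝ)^(-q) * (m:ℝ)^(1-p) = (m:ℝ)^(1-p-q) := by
      rw [← Real.rpow_add mpos]; ring_nf
    have hexp2 : (m:ℝ)^(-p) * (m:ℝ)^(1-q) = (m:ℝ)^(1-p-q) := by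
      rw [← Real.rpow_add mpos]; ring_nf
    rw [← Finset.sum_filter_add_sum_filter_not (Finset.Ico 1 m) (fun x => 2*x ≤ m)]
    have part1 : ∑ x ∈ (Finset.Ico 1 m).filter (fun x => 2*x ≤ m),
        (x:ℝ)^(-p) * ((m - x : ℕ):ℝ)^(-q) ≤ (4/(1-p)) * (m:ℝ)^(1-p-q) := by
      calc ∑ x ∈ (Finset.Ico 1 m).filter (fun x => 2*x ≤ m),
            (x:ℝ)^(-p) * ((m - x : ℕ):ℝ)^(-q)
          ≤ ∑ x ∈ (Finset.Ico 1 m).filter (fun x => 2*x ≤ m),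
            (x:ℝ)^(-p) * (2 * (m:ℝ)^(-q)) := by
            apply Finset.sum_le_sum
            intro x hx
            simp only [Finset.mem_filter, Finset.mem_Ico] at hx
            apply mul_le_mul_of_nonneg_left _ (Real.rpow_nonneg (by positivity) _)
            apply hhalf q hq0 hq1.le
            have : m ≤ 2 * (m - x) := by omega
            have : (m:ℝ) ≤ 2 * ((m - x : ℕ):ℝ) := by exact_mod_cast this
            linarith
        _ = (2 * (m:ℝ)^(-q)) * ∑ x ∈ (Finset.Ico 1 m).filter (fun x => 2*x ≤ m),
            (x:ℝ)^(-p) := by rw [Finset.mul_sum]; apply Finset.sum_congr rfl; intros; ring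
        _ ≤ (2 * (m:ℝ)^(-q)) * ∑ x ∈ Finset.Ico 1 m, (x:ℝ)^(-p) := by
            apply mul_le_mul_of_nonneg_left _ (by positivity)
            apply Finset.sum_le_sum_of_subset_of_nonneg (Finset.filter_subset _ _)
            intros; positivity
        _ ≤ (2 * (m:ℝ)^(-q)) * ((2/(1-p)) * (m:ℝ)^(1-p)) := by
            apply mul_le_mul_of_nonneg_left (sumA hp0 hp1 m) (by positivity)
        _ = (4/(1-p)) * ((m:ℝ)^(-q) * (m:ℝ)^(1-p)) := by ring
        _ = (4/(1-p)) * (m:ℝ)^(1-p-q) := by rw [hexp]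
    have part2 : ∑ x ∈ (Finset.Ico 1 m).filter (fun x => ¬ 2*x ≤ m),
        (x:ℝ)^(-p) * ((m - x : ℕ):ℝ)^(-q) ≤ (4/(1-q)) * (m:ℝ)^(1-p-q) := by
      calc ∑ x ∈ (Finset.Ico 1 m).filter (fun x => ¬ 2*x ≤ m),
            (x:ℝ)^(-p) * ((m - x : ℕ):ℝ)^(-q)
          ≤ ∑ x ∈ (Finset.Ico 1 m).filter (fun x => ¬ 2*x ≤ m),
            (2 * (m:ℝ)^(-p)) * ((m - x : ℕ):ℝ)^(-q) := by
            apply Finset.sum_le_sum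
            intro x hx
            simp only [Finset.mem_filter, Finset.mem_Ico] at hx
            apply mul_le_mul_of_nonneg_right _ (Real.rpow_nonneg (by positivity) _)
            apply hhalf p hp0 hp1.le
            have : m ≤ 2 * x := by omega
            have : (m:ℝ) ≤ 2 * (x:ℝ) := by exact_mod_cast this
            linarith
        _ = (2 * (m:ℝ)^(-p)) * ∑ x ∈ (Finset.Ico 1 m).filter (fun x => ¬ 2*x ≤ m),
            ((m - x : ℕ):ℝ)^(-q) := by rw [Finset.mul_sum]
        _ ≤ (2 * (m:ℝ)^(-p)) * ∑ x ∈ Finset.Ico 1 m, ((m - x : ℕ):ℝ)^(-q) := by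
            apply mul_le_mul_of_nonneg_left _ (by positivity)
            apply Finset.sum_le_sum_of_subset_of_nonneg (Finset.filter_subset _ _)
            intros; positivity
        _ = (2 * (m:ℝ)^(-p)) * ∑ x ∈ Finset.Ico 1 m, (x:ℝ)^(-q) := by rw [sumRefl]
        _ ≤ (2 * (m:ℝ)^(-p)) * ((2/(1-q)) * (m:ℝ)^(1-q)) := by
            apply mul_le_mul_of_nonneg_left (sumA hq0 hq1 m) (by positivity)
        _ = (4/(1-q)) * ((m:ℝ)^(-p) * (m:ℝ)^(1-q)) := by ring
        _ = (4/(1-q)) * (m:ℝ)^(1-p-q) := by rw [hexp2]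
    have hconst : 4/(1-p) + 4/(1-q) ≤ 8/((1-p)*(1-q)) := by
      rw [div_add_div _ _ h1.ne' h2.ne', div_le_div_iff₀ (by positivity) (by positivity)]
      nlinarith [mul_nonneg (by linarith : (0:ℝ) ≤ p + q) (mul_pos h1 h2).le]
    have := add_le_add part1 part2
    calc _ ≤ (4/(1-p)) * (m:ℝ)^(1-p-q) + (4/(1-q)) * (m:ℝ)^(1-p-q) := this
      _ = (4/(1-p) + 4/(1-q)) * (m:ℝ)^(1-p-q) := by ring
      _ ≤ (8/((1-p)*(1-q))) * (m:ℝ)^(1-p-q) :=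
          mul_le_mul_of_nonneg_right hconst (Real.rpow_nonneg mpos.le _)

theorem stmt_15 :
    ∃ C : ℝ, 0 < C ∧ ∀ n : ℕ, 0 < n →
      ∑ x₁ ∈ Finset.Ico 1 n, (x₁ : ℝ) ^ (-(7 / 11 : ℝ)) *
          (∑ x₂ ∈ Finset.Ico 1 (n - x₁),
              (x₂ : ℝ) ^ (-(7 / 11 : ℝ)) * ((n - x₁ - x₂ : ℕ) : ℝ) ^ (-(7 / 11 : ℝ))) *
          (∑ x₂' ∈ Finset.Ico 1 (n - x₁),
              (x₂' : ℝ) ^ (-(7 / 11 : ℝ)) * ((n - x₁ - x₂' : ℕ) : ℝ) ^ (-(7 / 11 : ℝ)))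
        ≤ C * (n : ℝ) ^ (-(2 / 11 : ℝ)) := by
  refine ⟨(121/2)^2 * (242/5), by norm_num, ?_⟩
  intro n hn
  have hg0 : (0:ℝ) < 7/11 := by norm_num
  have hg1 : (7/11:ℝ) < 1 := by norm_num
  have hd0 : (0:ℝ) < 6/11 := by norm_num
  have hd1 : (6/11:ℝ) < 1 := by norm_num
  have hinner : ∀ m : ℕ, ∑ x₂ ∈ Finset.Ico 1 m,
      (x₂:ℝ)^(-(7/11:ℝ)) * ((m - x₂ : ℕ):ℝ)^(-(7/11:ℝ))
      ≤ (121/2) * (m:ℝ)^(-(3/11:ℝ)) := by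
    intro m
    have h := sumB2 hg0 hg1 hg0 hg1 m
    have e1 : (8:ℝ)/((1-7/11)*(1-7/11)) = 121/2 := by norm_num
    have e2 : (1:ℝ)-7/11-7/11 = -(3/11) := by norm_num
    rwa [e1, e2] at h
  have houter : ∑ x ∈ Finset.Ico 1 n,
      (x:ℝ)^(-(7/11:ℝ)) * ((n - x : ℕ):ℝ)^(-(6/11:ℝ))
      ≤ (242/5) * (n:ℝ)^(-(2/11:ℝ)) := by
    have h := sumB2 hg0 hg1 hd0 hd1 n
    have e1 : (8:ℝ)/((1-7/11)*(1-6/11)) = 242/5 := by norm_num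
    have e2 : (1:ℝ)-7/11-6/11 = -(2/11) := by norm_num
    rwa [e1, e2] at h
  calc ∑ x₁ ∈ Finset.Ico 1 n, (x₁ : ℝ) ^ (-(7 / 11 : ℝ)) *
          (∑ x₂ ∈ Finset.Ico 1 (n - x₁),
              (x₂ : ℝ) ^ (-(7 / 11 : ℝ)) * ((n - x₁ - x₂ : ℕ) : ℝ) ^ (-(7 / 11 : ℝ))) *
          (∑ x₂' ∈ Finset.Ico 1 (n - x₁),
              (x₂' : ℝ) ^ (-(7 / 11 : ℝ)) * ((n - x₁ - x₂' : ℕ) : ℝ) ^ (-(7 / 11 : ℝ)))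
      ≤ ∑ x₁ ∈ Finset.Ico 1 n, (121/2)^2 *
          ((x₁:ℝ)^(-(7/11:ℝ)) * ((n - x₁ : ℕ):ℝ)^(-(6/11:ℝ))) := by
        apply Finset.sum_le_sum
        intro x hx
        simp only [Finset.mem_Ico] at hx
        have hm : 1 ≤ n - x := by omega
        have hmpos : (0:ℝ) < ((n - x : ℕ):ℝ) := by exact_mod_cast Nat.lt_of_lt_of_le Nat.zero_lt_one hm
        set S := ∑ x₂ ∈ Finset.Ico 1 (n - x),
            (x₂ : ℝ) ^ (-(7 / 11 : ℝ)) * ((n - x - x₂ : ℕ) : ℝ) ^ (-(7 / 11 : ℝ)) with hS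
        have hI : S ≤ (121/2) * ((n - x : ℕ):ℝ)^(-(3/11:ℝ)) := hinner (n - x)
        have hSnn : 0 ≤ S := Finset.sum_nonneg fun i _ => by positivity
        have ha : (0:ℝ) ≤ (x:ℝ)^(-(7/11:ℝ)) := Real.rpow_nonneg (by positivity) _
        have hBnn : (0:ℝ) ≤ (121/2) * ((n - x : ℕ):ℝ)^(-(3/11:ℝ)) := by positivity
        have key : (x:ℝ)^(-(7/11:ℝ)) * S * S ≤
            (x:ℝ)^(-(7/11:ℝ)) * ((121/2) * ((n - x : ℕ):ℝ)^(-(3/11:ℝ)))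
              * ((121/2) * ((n - x : ℕ):ℝ)^(-(3/11:ℝ))) := by
          apply mul_le_mul (mul_le_mul_of_nonneg_left hI ha) hI hSnn (by positivity)
        have hmm : ((n - x:ℕ):ℝ)^(-(3/11:ℝ)) * ((n - x:ℕ):ℝ)^(-(3/11:ℝ))
            = ((n - x:ℕ):ℝ)^(-(6/11:ℝ)) := by
          rw [← Real.rpow_add hmpos]; norm_num
        calc (x:ℝ)^(-(7/11:ℝ)) * S * S
            ≤ (x:ℝ)^(-(7/11:ℝ)) * ((121/2) * ((n - x : ℕ):ℝ)^(-(3/11:ℝ)))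
              * ((121/2) * ((n - x : ℕ):ℝ)^(-(3/11:ℝ))) := key
          _ = (121/2)^2 * ((x:ℝ)^(-(7/11:ℝ)) *
              (((n - x:ℕ):ℝ)^(-(3/11:ℝ)) * ((n - x:ℕ):ℝ)^(-(3/11:ℝ)))) := by ring
          _ = (121/2)^2 * ((x:ℝ)^(-(7/11:ℝ)) * ((n - x : ℕ):ℝ)^(-(6/11:ℝ))) := by
              rw [hmm]
    _ = (121/2)^2 * ∑ x ∈ Finset.Ico 1 n,
          (x:ℝ)^(-(7/11:ℝ)) * ((n - x : ℕ):ℝ)^(-(6/11:ℝ)) := by rw [Finset.mul_sum]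
    _ ≤ (121/2)^2 * ((242/5) * (n:ℝ)^(-(2/11:ℝ))) :=
        mul_le_mul_of_nonneg_left houter (by positivity)
    _ = (121/2)^2 * (242/5) * (n:ℝ)^(-(2/11:ℝ)) := by ring
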